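/- If f, g : [0,T] → ℝ are Hölder continuous of orders λ and β respectively with λ + β > 1, then the Riemann–Stieltjes integral ∫₀ᵀ f dg exists (Young integral existence). -/

import Mathlib

open Real Finset

namespace Young15

lemma chain_mono {α : Type*} [Preorder α] {u : ℕ → α} {N : ℕ}
    (h : ∀ i < N, u i ≤ u (i+1)) : ∀ i j, i ≤ j → j ≤ N → u i ≤ u j := by
  intro i j hij hjN
  induction j with
  | zero =>
    have : i = 0 := by omega
    subst this; exact le_rfl
  | succ j ih =>
    rcases Nat.eq_or_lt_of_le hij with rfl | hlt
    · exact le_rfl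
    · exact (ih (by omega) (by omega)).trans (h j (by omega))

lemma holder_apply {F : ℝ → ℝ} {K e T : ℝ} (he : 0 < e) (hK : 0 ≤ K)
    (hF : ∀ s ∈ Set.Icc (0:ℝ) T, ∀ t ∈ Set.Icc (0:ℝ) T, |F t - F s| ≤ K * |t - s| ^ e)
    {x y d : ℝ} (hx : x ∈ Set.Icc (0:ℝ) T) (hy : y ∈ Set.Icc (0:ℝ) T)
    (hd : |y - x| ≤ d) : |F y - F x| ≤ K * d ^ e :=
  (hF x hx y hy).trans (mul_le_mul_of_nonneg_left
    (Real.rpow_le_rpow (abs_nonneg _) hd he.le) hK)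

lemma lemA {T lam β Kf Kg : ℝ} {f g : ℝ → ℝ}
    (hlam : 0 < lam) (hβ : 0 < β) (hθ1 : 1 < lam + β) (hKf : 0 ≤ Kf) (hKg : 0 ≤ Kg)
    (hf : ∀ s ∈ Set.Icc (0:ℝ) T, ∀ t ∈ Set.Icc (0:ℝ) T, |f t - f s| ≤ Kf * |t - s| ^ lam)
    (hg : ∀ s ∈ Set.Icc (0:ℝ) T, ∀ t ∈ Set.Icc (0:ℝ) T, |g t - g s| ≤ Kg * |t - s| ^ β) :
    ∀ m : ℕ, 1 ≤ m → ∀ u η : ℕ → ℝ, 0 ≤ u 0 → u m ≤ T →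
      (∀ i < m, u i ≤ u (i+1)) → (∀ i < m, η i ∈ Set.Icc (u i) (u (i+1))) →
      ∀ ξ ∈ Set.Icc (u 0) (u m),
      |(∑ j ∈ Finset.range m, f (η j) * (g (u (j+1)) - g (u j))) - f ξ * (g (u m) - g (u 0))|
        ≤ Kf * Kg * (1 + 2 ^ (lam+β) * ∑ k ∈ Finset.Icc 1 (m-1), ((k:ℝ)) ^ (-(lam+β)))
            * (u m - u 0) ^ (lam+β) := by
  have hθpos : (0:ℝ) < lam + β := by linarith
  intro m hm
  induction m, hm using Nat.le_induction with
  | base =>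
    intro u η h0 hT1 hstep htag ξ hξ
    have hab : u 0 ≤ u 1 := hstep 0 one_pos
    rw [Finset.sum_range_one]
    have h1 : f (η 0) * (g (u 1) - g (u 0)) - f ξ * (g (u 1) - g (u 0))
        = (f (η 0) - f ξ) * (g (u 1) - g (u 0)) := by ring
    rw [h1, abs_mul]
    have hη := htag 0 one_pos
    have hmemη : η 0 ∈ Set.Icc (0:ℝ) T := ⟨le_trans h0 hη.1, le_trans hη.2 hT1⟩
    have hmemξ : ξ ∈ Set.Icc (0:ℝ) T := ⟨le_trans h0 hξ.1, le_trans hξ.2 hT1⟩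
    have hmem0 : u 0 ∈ Set.Icc (0:ℝ) T := ⟨h0, le_trans hab hT1⟩
    have hmem1 : u 1 ∈ Set.Icc (0:ℝ) T := ⟨le_trans h0 hab, hT1⟩
    have e1 : |f (η 0) - f ξ| ≤ Kf * (u 1 - u 0) ^ lam := by
      refine holder_apply hlam hKf hf hmemξ hmemη (abs_le.2 ⟨?_, ?_⟩)
      · have := hη.1; have := hξ.2; linarith
      · have := hη.2; have := hξ.1; linarith
    have e2 : |g (u 1) - g (u 0)| ≤ Kg * (u 1 - u 0) ^ β := by
      refine holder_apply hβ hKg hg hmem0 hmem1 ?_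
      rw [abs_of_nonneg (by linarith)]
    have e3 : |f (η 0) - f ξ| * |g (u 1) - g (u 0)|
        ≤ (Kf * (u 1 - u 0) ^ lam) * (Kg * (u 1 - u 0) ^ β) :=
      mul_le_mul e1 e2 (abs_nonneg _) (mul_nonneg hKf (Real.rpow_nonneg (by linarith) _))
    have e4 : (Kf * (u 1 - u 0) ^ lam) * (Kg * (u 1 - u 0) ^ β)
        = Kf * Kg * (u 1 - u 0) ^ (lam + β) := by
      rw [Real.rpow_add' (by linarith) (ne_of_gt hθpos)]; ring
    have hempty : Finset.Icc 1 (1-1) = (∅ : Finset ℕ) := Finset.Icc_eq_empty (by omega)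
    rw [hempty, Finset.sum_empty, mul_zero, add_zero, mul_one]
    calc |f (η 0) - f ξ| * |g (u 1) - g (u 0)|
        ≤ (Kf * (u 1 - u 0) ^ lam) * (Kg * (u 1 - u 0) ^ β) := e3
      _ = Kf * Kg * (u 1 - u 0) ^ (lam + β) := e4
  | succ m hm ih =>
    intro u η h0 hT1 hstep htag ξ hξ
    have hchain := chain_mono hstep
    have hba : u 0 ≤ u (m+1) := hchain 0 (m+1) (by omega) le_rfl
    have hm0 : (0:ℝ) < m := by exact_mod_cast hm
    -- telescoping bound
    have tel : ∑ i ∈ Finset.range m, (u (i+2) - u i) ≤ 2 * (u (m+1) - u 0) := by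
      have t1 : ∑ i ∈ Finset.range m, (u (i+1+1) - u (i+1)) = u (m+1) - u (0+1) :=
        Finset.sum_range_sub (fun i => u (i+1)) m
      have t2 : ∑ i ∈ Finset.range m, (u (i+1) - u i) = u m - u 0 :=
        Finset.sum_range_sub u m
      have hsplit : ∑ i ∈ Finset.range m, (u (i+2) - u i)
          = (∑ i ∈ Finset.range m, (u (i+1+1) - u (i+1)))
            + ∑ i ∈ Finset.range m, (u (i+1) - u i) := by
        rw [← Finset.sum_add_distrib]
        exact Finset.sum_congr rfl (fun i _ => by ring_nf)
      have h1 : u 0 ≤ u 1 := hchain 0 1 (by omega) (by omega)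
      have h2 : u m ≤ u (m+1) := hchain m (m+1) (by omega) (by omega)
      rw [hsplit, t1, t2]; linarith
    -- pigeonhole
    have hsumconst : ∑ _i ∈ Finset.range m, 2*(u (m+1) - u 0)/(m:ℝ) = 2*(u (m+1) - u 0) := by
      rw [Finset.sum_const, Finset.card_range, nsmul_eq_mul]
      field_simp
    obtain ⟨i', hi'mem, hi'⟩ :=
      Finset.exists_le_of_sum_le (s := Finset.range m)
        (f := fun i => u (i+2) - u i) (g := fun _ => 2*(u (m+1) - u 0)/(m:ℝ))
        ⟨0, Finset.mem_range.2 (by omega)⟩ (by rw [hsumconst]; exact tel)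
    have hi'm : i' < m := Finset.mem_range.1 hi'mem
    set i := i' + 1 with hidef
    set u' : ℕ → ℝ := fun j => if j < i then u j else u (j+1) with hu'def
    set η' : ℕ → ℝ := fun j => if j < i then η j else η (j+1) with hη'def
    have hu'0 : u' 0 = u 0 := if_pos (by omega)
    have hu'm : u' m = u (m+1) := if_neg (by omega)
    have hstep' : ∀ j < m, u' j ≤ u' (j+1) := by
      intro j hj
      simp only [hu'def]
      split_ifs with h1 h2 h2
      · exact hstep j (by omega)
      · exact hchain j (j+2) (by omega) (by omega)
      · omega
      · exact hstep (j+1) (by omega)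
    have htag' : ∀ j < m, η' j ∈ Set.Icc (u' j) (u' (j+1)) := by
      intro j hj
      simp only [hu'def, hη'def, Set.mem_Icc]
      split_ifs with h1 h2 h2
      · exact htag j (by omega)
      · have h3 := htag j (by omega)
        exact ⟨h3.1, h3.2.trans (hstep (j+1) (by omega))⟩
      · omega
      · exact htag (j+1) (by omega)
    -- the sum identity
    have key : (∑ j ∈ Finset.range (m+1), f (η j) * (g (u (j+1)) - g (u j)))
        - ∑ j ∈ Finset.range m, f (η' j) * (g (u' (j+1)) - g (u' j))
        = (f (η i) - f (η i')) * (g (u (i+1)) - g (u i)) := by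
      have e1 : ∑ j ∈ Finset.range (m+1), f (η j) * (g (u (j+1)) - g (u j))
          = (∑ j ∈ Finset.Ico 0 i', f (η j) * (g (u (j+1)) - g (u j)))
            + f (η i') * (g (u (i'+1)) - g (u i'))
            + f (η i) * (g (u (i+1)) - g (u i))
            + ∑ j ∈ Finset.Ico (i+1) (m+1), f (η j) * (g (u (j+1)) - g (u j)) := by
        rw [Finset.range_eq_Ico,
          ← Finset.sum_Ico_consecutive _ (Nat.zero_le (i+1)) (by omega : i+1 ≤ m+1),
          Finset.sum_Ico_succ_top (by omega : 0 ≤ i),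
          Finset.sum_Ico_succ_top (by omega : 0 ≤ i')]
      have e2 : ∑ j ∈ Finset.range m, f (η' j) * (g (u' (j+1)) - g (u' j))
          = (∑ j ∈ Finset.Ico 0 i', f (η j) * (g (u (j+1)) - g (u j)))
            + f (η i') * (g (u (i+1)) - g (u i'))
            + ∑ j ∈ Finset.Ico (i+1) (m+1), f (η j) * (g (u (j+1)) - g (u j)) := by
        rw [Finset.range_eq_Ico,
          ← Finset.sum_Ico_consecutive _ (Nat.zero_le i) (by omega : i ≤ m),
          Finset.sum_Ico_succ_top (by omega : 0 ≤ i')]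
        congr 1
        · congr 1
          · exact Finset.sum_congr rfl (fun j hj => by
              have hj' := Finset.mem_Ico.1 hj
              simp only [hu'def, hη'def, if_pos (show j < i by omega),
                if_pos (show j + 1 < i by omega)])
          · simp only [hu'def, hη'def, if_pos (show i' < i by omega),
              if_neg (show ¬ (i' + 1 < i) by omega)]
            rw [hidef]
        · rw [Finset.sum_Ico_eq_sum_range, Finset.sum_Ico_eq_sum_range]
          have hlen : m - i = m + 1 - (i + 1) := by omega
          rw [← hlen]
          refine Finset.sum_congr rfl (fun j hj => ?_)
          have hj' := Finset.mem_range.1 hj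
          simp only [hu'def, hη'def, if_neg (show ¬ (i + j < i) by omega),
            if_neg (show ¬ (i + j + 1 < i) by omega)]
          rw [show i + 1 + j = i + j + 1 from by omega]
      rw [e1, e2]
      have : u i' = u (i - 1) := by rw [show i - 1 = i' from by omega]
      ring_nf
      rw [show i = i' + 1 from hidef]
      ring
    -- bound on the removed term
    have hrem : |(f (η i) - f (η i')) * (g (u (i+1)) - g (u i))|
        ≤ Kf * Kg * (2 ^ (lam+β) * ((m:ℝ)) ^ (-(lam+β)) * (u (m+1) - u 0) ^ (lam+β)) := by
      have hd0 : 0 ≤ u (i+1) - u i' := by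
        have := hchain i' (i+1) (by omega) (by omega); linarith
      have hηi := htag i (by omega)
      have hηi' := htag i' (by omega)
      have hmem : ∀ x, u i' ≤ x → x ≤ u (i+1) → x ∈ Set.Icc (0:ℝ) T := by
        intro x hx1 hx2
        constructor
        · exact le_trans (le_trans h0 (hchain 0 i' (by omega) (by omega))) hx1
        · exact le_trans (le_trans hx2 (hchain (i+1) (m+1) (by omega) (by omega))) hT1
      have hui1 : u i ≤ u (i+1) := hstep i (by omega)
      have huii' : u i' ≤ u i := hstep i' (by omega)
      have hfbound : |f (η i) - f (η i')| ≤ Kf * (u (i+1) - u i') ^ lam := by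
        refine holder_apply hlam hKf hf
          (hmem _ hηi'.1 (hηi'.2.trans hui1)) (hmem _ (huii'.trans hηi.1) hηi.2)
          (abs_le.2 ⟨?_, ?_⟩)
        · have := hηi.1; have := hηi'.2; have := hηi'.1; have := hηi.2; linarith
        · have := hηi.2; have := hηi'.1; linarith
      have hgbound : |g (u (i+1)) - g (u i)| ≤ Kg * (u (i+1) - u i') ^ β := by
        refine holder_apply hβ hKg hg
          (hmem _ huii' hui1) (hmem _ (by linarith) (le_refl _)) ?_
        · rw [abs_of_nonneg (by linarith)]; linarith
      have hprod : |(f (η i) - f (η i')) * (g (u (i+1)) - g (u i))|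
          ≤ Kf * Kg * (u (i+1) - u i') ^ (lam + β) := by
        rw [abs_mul]
        calc |f (η i) - f (η i')| * |g (u (i+1)) - g (u i)|
            ≤ (Kf * (u (i+1) - u i') ^ lam) * (Kg * (u (i+1) - u i') ^ β) :=
              mul_le_mul hfbound hgbound (abs_nonneg _)
                (mul_nonneg hKf (Real.rpow_nonneg hd0 _))
          _ = Kf * Kg * (u (i+1) - u i') ^ (lam + β) := by
              rw [Real.rpow_add' hd0 (ne_of_gt hθpos)]; ring
      have hdsmall : u (i+1) - u i' ≤ 2*(u (m+1) - u 0)/(m:ℝ) := by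
        have : u (i'+2) - u i' ≤ 2*(u (m+1) - u 0)/(m:ℝ) := hi'
        rw [show i + 1 = i' + 2 from by omega]; exact this
      have hrpow : (u (i+1) - u i') ^ (lam+β) ≤ (2*(u (m+1) - u 0)/(m:ℝ)) ^ (lam+β) :=
        Real.rpow_le_rpow hd0 hdsmall (le_of_lt hθpos)
      have heq : (2*(u (m+1) - u 0)/(m:ℝ)) ^ (lam+β)
          = 2 ^ (lam+β) * ((m:ℝ)) ^ (-(lam+β)) * (u (m+1) - u 0) ^ (lam+β) := by
        rw [Real.div_rpow (by linarith) (le_of_lt hm0),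
          Real.mul_rpow (by norm_num) (by linarith),
          Real.rpow_neg (le_of_lt hm0)]
        ring
      calc |(f (η i) - f (η i')) * (g (u (i+1)) - g (u i))|
          ≤ Kf * Kg * (u (i+1) - u i') ^ (lam + β) := hprod
        _ ≤ Kf * Kg * (2*(u (m+1) - u 0)/(m:ℝ)) ^ (lam+β) :=
            mul_le_mul_of_nonneg_left hrpow (mul_nonneg hKf hKg)
        _ = Kf * Kg * (2 ^ (lam+β) * ((m:ℝ)) ^ (-(lam+β)) * (u (m+1) - u 0) ^ (lam+β)) := by
            rw [heq]
    -- apply the induction hypothesis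
    have hIH := ih u' η' (by rw [hu'0]; exact h0) (by rw [hu'm]; exact hT1) hstep' htag'
      ξ (by rw [hu'0, hu'm]; exact hξ)
    rw [hu'0, hu'm] at hIH
    -- Icc sum identity
    obtain ⟨m', rfl⟩ : ∃ m', m = m' + 1 := ⟨m - 1, by omega⟩
    have hIcc : ∑ k ∈ Finset.Icc 1 (m'+1), ((k:ℝ)) ^ (-(lam+β))
        = (∑ k ∈ Finset.Icc 1 (m'+1-1), ((k:ℝ)) ^ (-(lam+β)))
          + ((m'+1:ℕ):ℝ) ^ (-(lam+β)) := by
      rw [Finset.sum_Icc_succ_top (by omega : 1 ≤ m'+1)]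
      norm_num
    -- final assembly
    have habs := abs_sub_le
      (∑ j ∈ Finset.range (m'+1+1), f (η j) * (g (u (j+1)) - g (u j)))
      (∑ j ∈ Finset.range (m'+1), f (η' j) * (g (u' (j+1)) - g (u' j)))
      (f ξ * (g (u (m'+1+1)) - g (u 0)))
    rw [key] at habs
    have hΔ0 : (0:ℝ) ≤ (u (m'+1+1) - u 0) ^ (lam+β) := Real.rpow_nonneg (by linarith) _
    calc |(∑ j ∈ Finset.range (m'+1+1), f (η j) * (g (u (j+1)) - g (u j)))
        - f ξ * (g (u (m'+1+1)) - g (u 0))|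
        ≤ |(f (η i) - f (η i')) * (g (u (i+1)) - g (u i))|
          + |(∑ j ∈ Finset.range (m'+1), f (η' j) * (g (u' (j+1)) - g (u' j)))
            - f ξ * (g (u (m'+1+1)) - g (u 0))| := habs
      _ ≤ Kf * Kg * (2 ^ (lam+β) * (((m'+1:ℕ):ℝ)) ^ (-(lam+β)) * (u (m'+1+1) - u 0) ^ (lam+β))
          + Kf * Kg * (1 + 2 ^ (lam+β) * ∑ k ∈ Finset.Icc 1 (m'+1-1), ((k:ℝ)) ^ (-(lam+β)))
            * (u (m'+1+1) - u 0) ^ (lam+β) := add_le_add hrem hIH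
      _ = Kf * Kg * (1 + 2 ^ (lam+β) * ∑ k ∈ Finset.Icc 1 (m'+1+1-1), ((k:ℝ)) ^ (-(lam+β)))
            * (u (m'+1+1) - u 0) ^ (lam+β) := by
          simp only [Nat.add_sub_cancel]
          rw [hIcc]
          simp only [Nat.add_sub_cancel]
          push_cast
          ring

lemma sum_blocks {M : Type*} [AddCommMonoid M] (a : ℕ → M) (k : ℕ → ℕ) (n : ℕ)
    (h0 : k 0 = 0) (hk : ∀ i j, i ≤ j → j ≤ n → k i ≤ k j) :
    ∑ j ∈ Finset.range (k n), a j
      = ∑ i ∈ Finset.range n, ∑ j ∈ Finset.Ico (k i) (k (i+1)), a j := by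
  induction n with
  | zero => simp [h0]
  | succ n ih =>
    rw [Finset.sum_range_succ, ← ih (fun i j hij hj => hk i j hij (by omega))]
    simp only [Finset.range_eq_Ico]
    exact (Finset.sum_Ico_consecutive a (Nat.zero_le _) (hk n (n+1) (by omega) le_rfl)).symm

lemma lemB {T lam β Kf Kg : ℝ} {f g : ℝ → ℝ}
    (hlam : 0 < lam) (hβ : 0 < β) (hθ1 : 1 < lam + β) (hKf : 0 ≤ Kf) (hKg : 0 ≤ Kg)
    (hf : ∀ s ∈ Set.Icc (0:ℝ) T, ∀ t ∈ Set.Icc (0:ℝ) T, |f t - f s| ≤ Kf * |t - s| ^ lam)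
    (hg : ∀ s ∈ Set.Icc (0:ℝ) T, ∀ t ∈ Set.Icc (0:ℝ) T, |g t - g s| ≤ Kg * |t - s| ^ β)
    (Z : ℝ) (hZ : ∀ M : ℕ, ∑ k ∈ Finset.Icc 1 M, ((k:ℝ)) ^ (-(lam+β)) ≤ Z)
    (N n : ℕ) (r ζ ξ : ℕ → ℝ) (k : ℕ → ℕ)
    (hr0 : 0 ≤ r 0) (hrN : r N ≤ T)
    (hrstep : ∀ j < N, r j ≤ r (j+1))
    (hζ : ∀ j < N, ζ j ∈ Set.Icc (r j) (r (j+1)))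
    (hk0 : k 0 = 0) (hkn : k n = N) (hkstep : ∀ i < n, k i < k (i+1))
    (hξ : ∀ i < n, ξ i ∈ Set.Icc (r (k i)) (r (k (i+1)))) :
    |(∑ j ∈ Finset.range N, f (ζ j) * (g (r (j+1)) - g (r j)))
      - ∑ i ∈ Finset.range n, f (ξ i) * (g (r (k (i+1))) - g (r (k i)))|
      ≤ Kf*Kg*(1 + 2^(lam+β)*Z)
          * ∑ i ∈ Finset.range n, (r (k (i+1)) - r (k i))^(lam+β) := by
  have kchain : ∀ i j, i ≤ j → j ≤ n → k i ≤ k j :=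
    chain_mono (fun i hi => (hkstep i hi).le)
  have rchain := chain_mono hrstep
  have hblocks : ∑ j ∈ Finset.range N, f (ζ j) * (g (r (j+1)) - g (r j))
      = ∑ i ∈ Finset.range n, ∑ j ∈ Finset.Ico (k i) (k (i+1)),
          f (ζ j) * (g (r (j+1)) - g (r j)) := by
    rw [← hkn]; exact sum_blocks _ k n hk0 kchain
  rw [hblocks, ← Finset.sum_sub_distrib]
  refine (Finset.abs_sum_le_sum_abs _ _).trans ?_
  rw [Finset.mul_sum]
  refine Finset.sum_le_sum (fun i hi => ?_)
  have hin : i < n := Finset.mem_range.1 hi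
  have hkiN : k i ≤ N := hkn ▸ kchain i n (by omega) le_rfl
  have hki1N : k (i+1) ≤ N := hkn ▸ kchain (i+1) n (by omega) le_rfl
  have hki : k i < k (i+1) := hkstep i hin
  set m := k (i+1) - k i with hmdef
  have hm1 : 1 ≤ m := by omega
  set u : ℕ → ℝ := fun j => r (k i + j) with hudef
  set η : ℕ → ℝ := fun j => ζ (k i + j) with hηdef
  have hu0 : u 0 = r (k i) := by simp [hudef]
  have hum : u m = r (k (i+1)) := by
    simp only [hudef, hmdef]
    rw [show k i + (k (i+1) - k i) = k (i+1) from by omega]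
  have hblocksum : ∑ j ∈ Finset.Ico (k i) (k (i+1)), f (ζ j) * (g (r (j+1)) - g (r j))
      = ∑ j ∈ Finset.range m, f (η j) * (g (u (j+1)) - g (u j)) := by
    rw [Finset.sum_Ico_eq_sum_range]
    exact Finset.sum_congr rfl (fun j hj => by
      simp only [hudef, hηdef]
      rw [show k i + j + 1 = k i + (j+1) from by omega])
  have hustep : ∀ j < m, u j ≤ u (j+1) := by
    intro j hj
    simp only [hudef]
    rw [show k i + (j+1) = (k i + j) + 1 from by omega]
    exact hrstep (k i + j) (by omega)
  have hutag : ∀ j < m, η j ∈ Set.Icc (u j) (u (j+1)) := by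
    intro j hj
    simp only [hudef, hηdef]
    rw [show k i + (j+1) = (k i + j) + 1 from by omega]
    exact hζ (k i + j) (by omega)
  have h0u : 0 ≤ u 0 := hu0 ▸ le_trans hr0 (rchain 0 (k i) (by omega) hkiN)
  have humT : u m ≤ T := hum ▸ le_trans (rchain (k (i+1)) N hki1N le_rfl) hrN
  have happ := lemA hlam hβ hθ1 hKf hKg hf hg m hm1 u η h0u humT hustep hutag
    (ξ i) (by rw [hu0, hum]; exact hξ i hin)
  rw [hu0, hum] at happ
  rw [hblocksum]
  refine happ.trans ?_
  have hΔ0 : (0:ℝ) ≤ (r (k (i+1)) - r (k i)) ^ (lam+β) := by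
    refine Real.rpow_nonneg ?_ _
    have := rchain (k i) (k (i+1)) (by omega) hki1N
    linarith
  refine mul_le_mul_of_nonneg_right ?_ hΔ0
  refine mul_le_mul_of_nonneg_left ?_ (mul_nonneg hKf hKg)
  have h2 : (0:ℝ) ≤ 2 ^ (lam+β) := Real.rpow_nonneg (by norm_num) _
  nlinarith [hZ (m-1)]

lemma exists_strictMono_embed {M : ℕ} (rf : Fin M → ℝ) (hrf : Monotone rf)
    {n : ℕ} (tt : Fin (n+1) → ℝ) (htt : Monotone tt)
    (e : Fin (n+1) → Fin M) (he : Function.Injective e) (hre : ∀ i, rf (e i) = tt i) :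
    ∃ e2 : Fin (n+1) → Fin M, StrictMono e2 ∧ ∀ i, rf (e2 i) = tt i := by
  classical
  set pp := Tuple.sort e with hpp
  have hmono : Monotone (e ∘ pp) := Tuple.monotone_sort e
  have hinj : Function.Injective (e ∘ pp) := he.comp pp.injective
  refine ⟨e ∘ pp, hmono.strictMono_of_injective hinj, ?_⟩
  have h1 : rf ∘ (e ∘ pp) = tt ∘ pp := by
    funext i; exact hre (pp i)
  have h2 : Monotone (tt ∘ pp) := h1 ▸ hrf.comp hmono
  have h3 : tt ∘ pp = tt ∘ (Equiv.refl (Fin (n+1))) :=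
    Tuple.unique_monotone h2 (by simpa using htt)
  intro i
  have h4 := congrFun h3 i
  simp only [Function.comp_apply, Equiv.refl_apply] at h4
  calc rf ((e ∘ pp) i) = tt (pp i) := hre (pp i)
    _ = tt i := h4

lemma embed_to_nat {Nn nn : ℕ} (hn : 0 < nn) (r : ℕ → ℝ) (t : ℕ → ℝ)
    (e2 : Fin (nn+1) → Fin (Nn+1)) (he2 : StrictMono e2)
    (hval : ∀ i : Fin (nn+1), r ((e2 i) : ℕ) = t (i : ℕ))
    (hr0 : r 0 = t 0) (hrN : r Nn = t nn) :
    ∃ k : ℕ → ℕ, k 0 = 0 ∧ k nn = Nn ∧ (∀ i < nn, k i < k (i+1)) ∧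
      ∀ i ≤ nn, r (k i) = t i := by
  classical
  set kk : ℕ → ℕ := fun i => ((e2 ⟨min i nn, by omega⟩ : Fin (Nn+1)) : ℕ) with hkk
  have hkkmono : ∀ a b, a < b → b ≤ nn → kk a < kk b := by
    intro a b hab hb
    have h : (⟨min a nn, by omega⟩ : Fin (nn+1)) < ⟨min b nn, by omega⟩ := by
      rw [Fin.mk_lt_mk]; omega
    exact Fin.lt_def.1 (he2 h)
  have hkkle : ∀ a, kk a ≤ Nn := fun a => Fin.is_le _
  have hkkval : ∀ a ≤ nn, r (kk a) = t a := by
    intro a ha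
    have h := hval ⟨min a nn, by omega⟩
    simpa [hkk, min_eq_left ha] using h
  have hNpos : 0 < Nn := by
    have h1 := hkkmono 0 nn hn le_rfl
    have h2 := hkkle nn
    omega
  refine ⟨fun i => if i = 0 then 0 else if i = nn then Nn else kk i, by simp, ?_, ?_, ?_⟩
  · beta_reduce
    rw [if_neg (by omega), if_pos rfl]
  · intro i hi
    beta_reduce
    have hA := hkkmono i (i+1) (by omega) (by omega)
    have hD := hkkmono i nn (by omega) le_rfl
    have hE := hkkle nn
    rw [if_neg (by omega : ¬(i + 1 = 0))]
    split_ifs with b1 b2 b3 b4 b5 <;> omega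
  · intro i hi
    beta_reduce
    by_cases h0 : i = 0
    · subst h0; rw [if_pos rfl]; exact hr0
    · by_cases h1 : i = nn
      · subst h1; rw [if_neg h0, if_pos rfl]; exact hrN
      · rw [if_neg h0, if_neg h1]
        exact hkkval i hi

lemma merge {T : ℝ} (n m : ℕ) (hn : 0 < n) (hm : 0 < m) (t s : ℕ → ℝ)
    (ht0 : t 0 = 0) (htn : t n = T) (hts : ∀ i < n, t i ≤ t (i+1))
    (hs0 : s 0 = 0) (hsm : s m = T) (hss : ∀ i < m, s i ≤ s (i+1)) :
    ∃ (N : ℕ) (r : ℕ → ℝ) (kt ks : ℕ → ℕ),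
      (∀ j < N, r j ≤ r (j+1)) ∧
      kt 0 = 0 ∧ kt n = N ∧ (∀ i < n, kt i < kt (i+1)) ∧ (∀ i ≤ n, r (kt i) = t i) ∧
      ks 0 = 0 ∧ ks m = N ∧ (∀ i < m, ks i < ks (i+1)) ∧ (∀ i ≤ m, r (ks i) = s i) := by
  classical
  set N := n + m + 1 with hN
  set c : Fin (N+1) → ℝ := fun p => if (p:ℕ) ≤ n then t p else s ((p:ℕ) - (n+1)) with hc
  set sg := Tuple.sort c with hsg
  set rf : Fin (N+1) → ℝ := c ∘ sg with hrf
  have hrfmono : Monotone rf := Tuple.monotone_sort c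
  have htmem : ∀ i ≤ n, 0 ≤ t i ∧ t i ≤ T := fun i hi =>
    ⟨ht0 ▸ chain_mono hts 0 i (Nat.zero_le _) hi, htn ▸ chain_mono hts i n hi le_rfl⟩
  have hsmem : ∀ i ≤ m, 0 ≤ s i ∧ s i ≤ T := fun i hi =>
    ⟨hs0 ▸ chain_mono hss 0 i (Nat.zero_le _) hi, hsm ▸ chain_mono hss i m hi le_rfl⟩
  have hcmem : ∀ p, 0 ≤ c p ∧ c p ≤ T := by
    intro p
    simp only [hc]
    split_ifs with h
    · exact htmem _ h
    · exact hsmem _ (by have := p.isLt; omega)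
  -- t part
  obtain ⟨e2t, he2t, hre2t⟩ := exists_strictMono_embed rf hrfmono
    (fun i : Fin (n+1) => t i)
    (fun i j hij => chain_mono hts i j hij (by omega))
    (fun i => sg.symm ⟨(i:ℕ), by have := i.isLt; omega⟩)
    ((Equiv.injective _).comp (fun a b hab => by
      apply Fin.ext
      have h := congrArg Fin.val hab
      simpa using h))
    (fun i => by
      simp only [hrf, Function.comp_apply, Equiv.apply_symm_apply, hc]
      rw [if_pos (by simpa using i.is_le)])
  -- s part
  obtain ⟨e2s, he2s, hre2s⟩ := exists_strictMono_embed rf hrfmono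
    (fun i : Fin (m+1) => s i)
    (fun i j hij => chain_mono hss i j hij (by omega))
    (fun i => sg.symm ⟨n + 1 + (i:ℕ), by have := i.isLt; omega⟩)
    ((Equiv.injective _).comp (fun a b hab => by
      apply Fin.ext
      have h := congrArg Fin.val hab
      simpa using h))
    (fun i => by
      simp only [hrf, Function.comp_apply, Equiv.apply_symm_apply, hc]
      rw [if_neg (by simp <;> omega)]
      congr 1
      simp <;> omega)
  -- the ℕ-level partition
  set r : ℕ → ℝ := fun j => rf ⟨min j N, by omega⟩ with hr
  have hrval : ∀ j : Fin (N+1), r (j:ℕ) = rf j := by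
    intro j
    simp only [hr]
    congr 1
    exact Fin.ext (by simpa using Nat.min_eq_left (by have := j.isLt; omega : (j:ℕ) ≤ N))
  have hrstep : ∀ j < N, r j ≤ r (j+1) := by
    intro j hj
    simp only [hr]
    refine hrfmono ?_
    rw [Fin.mk_le_mk]
    omega
  have hr00 : r 0 = t 0 := by
    have h1 : r 0 = rf ⟨0, by omega⟩ := hrval ⟨0, by omega⟩
    have h2 : rf ⟨0, by omega⟩ ≤ rf (e2t ⟨0, by omega⟩) := hrfmono (Fin.zero_le _)
    have h3 : rf (e2t ⟨0, by omega⟩) = t 0 := by simpa using hre2t ⟨0, by omega⟩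
    have h4 : 0 ≤ rf ⟨0, by omega⟩ := (hcmem _).1
    rw [h1, ht0]
    rw [h3, ht0] at h2
    linarith
  have hrNN : r N = t n := by
    have h1 : r N = rf ⟨N, by omega⟩ := hrval ⟨N, by omega⟩
    have h2 : rf (e2t ⟨n, by omega⟩) ≤ rf ⟨N, by omega⟩ :=
      hrfmono (Fin.le_last _)
    have h3 : rf (e2t ⟨n, by omega⟩) = t n := by simpa using hre2t ⟨n, by omega⟩
    have h4 : rf ⟨N, by omega⟩ ≤ T := (hcmem _).2
    rw [h1, htn]
    rw [h3, htn] at h2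
    linarith
  have hr0s : r 0 = s 0 := by rw [hr00, ht0, hs0]
  have hrNs : r N = s m := by rw [hrNN, htn, hsm]
  obtain ⟨kt, hkt0, hktn, hktstep, hktval⟩ := embed_to_nat hn r t e2t he2t
    (fun i => by rw [hrval (e2t i)]; exact hre2t i) hr00 hrNN
  obtain ⟨ks, hks0, hksm, hksstep, hksval⟩ := embed_to_nat hm r s e2s he2s
    (fun i => by rw [hrval (e2s i)]; exact hre2s i) hr0s hrNs
  exact ⟨N, r, kt, ks, hrstep, hkt0, hktn, hktstep, hktval, hks0, hksm, hksstep, hksval⟩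

lemma mesh_sum {th d : ℝ} (hth : 1 < th) (n : ℕ) (t : ℕ → ℝ)
    (hts : ∀ i < n, t i ≤ t (i+1)) (hmesh : ∀ i < n, t (i+1) - t i ≤ d) :
    ∑ i ∈ Finset.range n, (t (i+1) - t i)^th ≤ d^(th-1) * (t n - t 0) := by
  have key : ∀ i ∈ Finset.range n, (t (i+1) - t i)^th ≤ d^(th-1) * (t (i+1) - t i) := by
    intro i hi'
    have hi : i < n := Finset.mem_range.1 hi'
    have h0 : 0 ≤ t (i+1) - t i := by have := hts i hi; linarith
    have h1 : (t (i+1) - t i)^th = (t (i+1) - t i)^(th-1) * (t (i+1) - t i) := by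
      rcases eq_or_lt_of_le h0 with h | h
      · rw [← h, Real.zero_rpow (by linarith), Real.zero_rpow (by linarith), mul_zero]
      · rw [Real.rpow_sub h, Real.rpow_one, div_mul_cancel₀ _ (ne_of_gt h)]
    rw [h1]
    exact mul_le_mul_of_nonneg_right
      (Real.rpow_le_rpow h0 (hmesh i hi) (by linarith)) h0
  calc ∑ i ∈ Finset.range n, (t (i+1) - t i)^th
      ≤ ∑ i ∈ Finset.range n, d^(th-1) * (t (i+1) - t i) := Finset.sum_le_sum key
    _ = d^(th-1) * (t n - t 0) := by rw [← Finset.mul_sum, Finset.sum_range_sub]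

lemma lemC {T lam β Kf Kg : ℝ} {f g : ℝ → ℝ}
    (hlam : 0 < lam) (hβ : 0 < β) (hθ1 : 1 < lam + β) (hKf : 0 ≤ Kf) (hKg : 0 ≤ Kg)
    (hf : ∀ s ∈ Set.Icc (0:ℝ) T, ∀ t ∈ Set.Icc (0:ℝ) T, |f t - f s| ≤ Kf * |t - s| ^ lam)
    (hg : ∀ s ∈ Set.Icc (0:ℝ) T, ∀ t ∈ Set.Icc (0:ℝ) T, |g t - g s| ≤ Kg * |t - s| ^ β)
    (Z : ℝ) (hZ : ∀ M : ℕ, ∑ k ∈ Finset.Icc 1 M, ((k:ℝ)) ^ (-(lam+β)) ≤ Z)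
    (δ : ℝ)
    (n : ℕ) (t ξ : ℕ → ℝ) (hn : 0 < n) (ht0 : t 0 = 0) (htn : t n = T)
    (hts : ∀ i < n, t i ≤ t (i+1)) (htmesh : ∀ i < n, t (i+1) - t i ≤ δ)
    (htξ : ∀ i < n, ξ i ∈ Set.Icc (t i) (t (i+1)))
    (m : ℕ) (s η : ℕ → ℝ) (hm : 0 < m) (hs0 : s 0 = 0) (hsm : s m = T)
    (hss : ∀ i < m, s i ≤ s (i+1)) (hsmesh : ∀ i < m, s (i+1) - s i ≤ δ)
    (hsη : ∀ i < m, η i ∈ Set.Icc (s i) (s (i+1))) :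
    |(∑ i ∈ Finset.range n, f (ξ i) * (g (t (i+1)) - g (t i)))
      - ∑ i ∈ Finset.range m, f (η i) * (g (s (i+1)) - g (s i))|
      ≤ 2 * (Kf*Kg*(1 + 2^(lam+β)*Z) * (δ^(lam+β-1) * T)) := by
  obtain ⟨N, r, kt, ks, hrstep, hkt0, hktn, hktstep, hktval, hks0, hksm, hksstep, hksval⟩ :=
    merge n m hn hm t s ht0 htn hts hs0 hsm hss
  have hr00 : r 0 = 0 := by
    have h := hktval 0 (by omega); rw [hkt0] at h; rw [h, ht0]
  have hrNT : r N = T := by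
    have h := hktval n le_rfl; rw [hktn] at h; rw [h, htn]
  have hZ0 : 0 ≤ Z := le_trans (by simp) (hZ 0)
  have hC0 : 0 ≤ Kf*Kg*(1 + 2^(lam+β)*Z) := by
    refine mul_nonneg (mul_nonneg hKf hKg) ?_
    have h2 : (0:ℝ) ≤ 2 ^ (lam+β) := Real.rpow_nonneg (by norm_num) _
    nlinarith
  have hζ : ∀ j < N, r j ∈ Set.Icc (r j) (r (j+1)) := fun j hj => ⟨le_rfl, hrstep j hj⟩
  -- t side
  have B1 := lemB hlam hβ hθ1 hKf hKg hf hg Z hZ N n r (fun j => r j) ξ kt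
    (le_of_eq hr00.symm) (le_of_eq hrNT) hrstep hζ hkt0 hktn hktstep
    (fun i hi => by
      rw [hktval i (by omega), hktval (i+1) (by omega)]
      exact htξ i hi)
  have e1 : ∑ i ∈ Finset.range n, f (ξ i) * (g (r (kt (i+1))) - g (r (kt i)))
      = ∑ i ∈ Finset.range n, f (ξ i) * (g (t (i+1)) - g (t i)) :=
    Finset.sum_congr rfl (fun i hi => by
      have h := Finset.mem_range.1 hi
      rw [hktval i (by omega), hktval (i+1) (by omega)])
  have e2 : ∑ i ∈ Finset.range n, (r (kt (i+1)) - r (kt i))^(lam+β)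
      = ∑ i ∈ Finset.range n, (t (i+1) - t i)^(lam+β) :=
    Finset.sum_congr rfl (fun i hi => by
      have h := Finset.mem_range.1 hi
      rw [hktval i (by omega), hktval (i+1) (by omega)])
  rw [e1, e2] at B1
  have m1 : ∑ i ∈ Finset.range n, (t (i+1) - t i)^(lam+β) ≤ δ^(lam+β-1) * T := by
    have h := mesh_sum hθ1 n t hts htmesh
    rw [ht0, htn] at h
    simpa using h
  have B1' : |(∑ j ∈ Finset.range N, f (r j) * (g (r (j+1)) - g (r j)))
      - ∑ i ∈ Finset.range n, f (ξ i) * (g (t (i+1)) - g (t i))|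
      ≤ Kf*Kg*(1 + 2^(lam+β)*Z) * (δ^(lam+β-1) * T) :=
    B1.trans (mul_le_mul_of_nonneg_left m1 hC0)
  -- s side
  have B2 := lemB hlam hβ hθ1 hKf hKg hf hg Z hZ N m r (fun j => r j) η ks
    (le_of_eq hr00.symm) (le_of_eq hrNT) hrstep hζ hks0 hksm hksstep
    (fun i hi => by
      rw [hksval i (by omega), hksval (i+1) (by omega)]
      exact hsη i hi)
  have e3 : ∑ i ∈ Finset.range m, f (η i) * (g (r (ks (i+1))) - g (r (ks i)))
      = ∑ i ∈ Finset.range m, f (η i) * (g (s (i+1)) - g (s i)) :=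
    Finset.sum_congr rfl (fun i hi => by
      have h := Finset.mem_range.1 hi
      rw [hksval i (by omega), hksval (i+1) (by omega)])
  have e4 : ∑ i ∈ Finset.range m, (r (ks (i+1)) - r (ks i))^(lam+β)
      = ∑ i ∈ Finset.range m, (s (i+1) - s i)^(lam+β) :=
    Finset.sum_congr rfl (fun i hi => by
      have h := Finset.mem_range.1 hi
      rw [hksval i (by omega), hksval (i+1) (by omega)])
  rw [e3, e4] at B2
  have m2 : ∑ i ∈ Finset.range m, (s (i+1) - s i)^(lam+β) ≤ δ^(lam+β-1) * T := by
    have h := mesh_sum hθ1 m s hss hsmesh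
    rw [hs0, hsm] at h
    simpa using h
  have B2' : |(∑ j ∈ Finset.range N, f (r j) * (g (r (j+1)) - g (r j)))
      - ∑ i ∈ Finset.range m, f (η i) * (g (s (i+1)) - g (s i))|
      ≤ Kf*Kg*(1 + 2^(lam+β)*Z) * (δ^(lam+β-1) * T) :=
    B2.trans (mul_le_mul_of_nonneg_left m2 hC0)
  set A := ∑ i ∈ Finset.range n, f (ξ i) * (g (t (i+1)) - g (t i))
  set B := ∑ i ∈ Finset.range m, f (η i) * (g (s (i+1)) - g (s i))
  set F := ∑ j ∈ Finset.range N, f (r j) * (g (r (j+1)) - g (r j))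
  calc |A - B| ≤ |A - F| + |F - B| := abs_sub_le A F B
    _ = |F - A| + |F - B| := by rw [abs_sub_comm]
    _ ≤ Kf*Kg*(1 + 2^(lam+β)*Z) * (δ^(lam+β-1) * T)
        + Kf*Kg*(1 + 2^(lam+β)*Z) * (δ^(lam+β-1) * T) := add_le_add B1' B2'
    _ = 2 * (Kf*Kg*(1 + 2^(lam+β)*Z) * (δ^(lam+β-1) * T)) := by ring

lemma bound_aux {C T ε : ℝ} (hC0 : 0 ≤ C) (hT : 0 ≤ T) (hε : 0 < ε) :
    2*(C*(ε/(2*(2*C*T+1))*T)) ≤ ε/2 := by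
  have hden : (0:ℝ) < 2*(2*C*T+1) := by nlinarith [mul_nonneg hC0 hT]
  have h2 : 2*(C*(ε/(2*(2*C*T+1))*T)) = (2*C*T) * ε / (2*(2*C*T+1)) := by ring
  rw [h2, div_le_div_iff₀ hden (by norm_num : (0:ℝ) < 2)]
  nlinarith [mul_nonneg (mul_nonneg hC0 hT) hε.le]

end Young15

set_option maxHeartbeats 2000000 in
open Young15 in
/-- Young's theorem: if `f` is `λ`-Hölder and `g` is `β`-Hölder on `[0,T]` with
`λ + β > 1`, then the Riemann–Stieltjes sums of `∫₀ᵀ f dg` converge as the mesh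
of the tagged partition tends to `0`. -/
theorem stmt_15 (T lam β Kf Kg : ℝ) (f g : ℝ → ℝ)
    (hT : 0 < T) (hlam : 0 < lam) (hlam1 : lam ≤ 1) (hβ : 0 < β) (hβ1 : β ≤ 1)
    (hsum : 1 < lam + β) (hKf : 0 ≤ Kf) (hKg : 0 ≤ Kg)
    (hf : ∀ s ∈ Set.Icc (0:ℝ) T, ∀ t ∈ Set.Icc (0:ℝ) T, |f t - f s| ≤ Kf * |t - s| ^ lam)
    (hg : ∀ s ∈ Set.Icc (0:ℝ) T, ∀ t ∈ Set.Icc (0:ℝ) T, |g t - g s| ≤ Kg * |t - s| ^ β) :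
    ∃ I : ℝ, ∀ ε > 0, ∃ δ > 0, ∀ (n : ℕ) (t ξ : ℕ → ℝ),
      0 < n →
      t 0 = 0 → t n = T →
      (∀ i < n, t i ≤ t (i + 1)) →
      (∀ i < n, t (i + 1) - t i ≤ δ) →
      (∀ i < n, ξ i ∈ Set.Icc (t i) (t (i + 1))) →
      |(∑ i ∈ Finset.range n, f (ξ i) * (g (t (i + 1)) - g (t i))) - I| ≤ ε := by
  have hθ1 : 1 < lam + β := hsum
  -- the zeta-type constant
  have hsummable : Summable (fun k : ℕ => (((k:ℝ))+1) ^ (-(lam+β))) := by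
    have h1 : Summable (fun n : ℕ => ((n:ℝ) ^ (lam+β))⁻¹) := Real.summable_nat_rpow_inv.2 hθ1
    have h2 : Summable (fun n : ℕ => (((n+1:ℕ):ℝ) ^ (lam+β))⁻¹) := (summable_nat_add_iff 1).2 h1
    refine h2.congr (fun k => ?_)
    push_cast
    rw [← Real.rpow_neg (by positivity)]
  set Z := ∑' k : ℕ, (((k:ℝ))+1) ^ (-(lam+β)) with hZdef
  have hZ : ∀ M : ℕ, ∑ k ∈ Finset.Icc 1 M, ((k:ℝ)) ^ (-(lam+β)) ≤ Z := by
    intro M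
    have e : ∑ k ∈ Finset.Icc 1 M, ((k:ℝ)) ^ (-(lam+β))
        = ∑ k ∈ Finset.range M, (((k:ℝ))+1) ^ (-(lam+β)) := by
      rw [← Finset.Ico_add_one_right_eq_Icc, Finset.sum_Ico_eq_sum_range]
      try simp only [Nat.add_sub_cancel]
      try simp only [Nat.succ_sub_one]
      refine Finset.sum_congr rfl (fun k _ => ?_)
      push_cast
      ring_nf
    rw [e]
    exact Summable.sum_le_tsum _ (fun k _ => Real.rpow_nonneg (by positivity) _) hsummable
  have hZ0 : 0 ≤ Z := le_trans (by simp) (hZ 0)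
  set C := Kf*Kg*(1 + 2^(lam+β)*Z) with hCdef
  have hC0 : 0 ≤ C := by
    have h2 : (0:ℝ) ≤ 2^(lam+β) := Real.rpow_nonneg (by norm_num) _
    exact mul_nonneg (mul_nonneg hKf hKg) (by nlinarith)
  clear_value Z C
  -- uniform partitions
  set up : ℕ → ℕ → ℝ := fun p i => T * i / (p+1) with hupdef
  have hup0 : ∀ p, up p 0 = 0 := by intro p; simp [hupdef]
  have hupT : ∀ p, up p (p+1) = T := by
    intro p
    simp only [hupdef]
    push_cast
    field_simp
  have hupstep : ∀ p, ∀ i < p+1, up p i ≤ up p (i+1) := by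
    intro p i _
    simp only [hupdef]
    rw [div_le_div_iff₀ (by positivity) (by positivity)]
    push_cast
    nlinarith [mul_nonneg (mul_nonneg hT.le (show (0:ℝ) ≤ (p:ℝ)+1 by positivity))
      (show (0:ℝ) ≤ 1 by norm_num)]
  have hupmesh : ∀ p, ∀ i < p+1, up p (i+1) - up p i = T/((p:ℝ)+1) := by
    intro p i _
    simp only [hupdef]
    push_cast
    field_simp
    ring
  set IS : ℕ → ℝ := fun p => ∑ i ∈ Finset.range (p+1),
    f (up p i) * (g (up p (i+1)) - g (up p i)) with hISdef
  -- Cauchy estimate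
  have key2 : ∀ P p q : ℕ, P ≤ p → P ≤ q →
      |IS p - IS q| ≤ 2*(C*((T/((P:ℝ)+1))^(lam+β-1)*T)) := by
    intro P p q hp hq
    have hmono : ∀ r : ℕ, P ≤ r → T/((r:ℝ)+1) ≤ T/((P:ℝ)+1) := by
      intro r hr
      exact div_le_div_of_nonneg_left hT.le (by positivity) (by exact_mod_cast by omega)
    have happ := lemC hlam hβ hθ1 hKf hKg hf hg Z hZ (T/((P:ℝ)+1))
      (p+1) (up p) (up p) (by omega) (hup0 p) (hupT p) (hupstep p)
      (fun i hi => by rw [hupmesh p i hi]; exact hmono p hp)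
      (fun i hi => ⟨le_rfl, hupstep p i hi⟩)
      (q+1) (up q) (up q) (by omega) (hup0 q) (hupT q) (hupstep q)
      (fun i hi => by rw [hupmesh q i hi]; exact hmono q hq)
      (fun i hi => ⟨le_rfl, hupstep q i hi⟩)
    simp only [hISdef]
    rw [hCdef]
    exact happ
  have hcauchy : CauchySeq IS := by
    refine cauchySeq_of_le_tendsto_0 (fun P => 2*(C*((T/((P:ℝ)+1))^(lam+β-1)*T)))
      (fun p q P hp hq => ?_) ?_
    · rw [Real.dist_eq]
      exact key2 P p q hp hq
    · have h1 : Filter.Tendsto (fun P : ℕ => T/((P:ℝ)+1)) Filter.atTop (nhds 0) := by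
        have h0 := (tendsto_const_div_atTop_nhds_zero_nat T).comp (Filter.tendsto_add_atTop_nat 1)
        refine h0.congr (fun P => ?_)
        simp only [Function.comp_apply]
        push_cast
        ring
      have h2 : ContinuousAt (fun x : ℝ => x ^ (lam+β-1)) 0 :=
        Real.continuousAt_rpow_const 0 _ (Or.inr (by linarith))
      have h3 : Filter.Tendsto (fun P : ℕ => (T/((P:ℝ)+1)) ^ (lam+β-1))
          Filter.atTop (nhds 0) := by
        have h4 := h2.tendsto.comp h1
        simpa [Function.comp_def, Real.zero_rpow (show lam+β-1 ≠ 0 by intro h; linarith)] using h4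
      have h5 := h3.const_mul (2*C*T)
      rw [mul_zero] at h5
      refine h5.congr (fun P => ?_)
      ring
  obtain ⟨I, hI⟩ := cauchySeq_tendsto_of_complete hcauchy
  refine ⟨I, ?_⟩
  intro ε hε
  have hden : (0:ℝ) < 2*(2*C*T+1) := by nlinarith [mul_nonneg hC0 hT.le]
  set E := ε/(2*(2*C*T+1)) with hEdef
  have hE : 0 < E := div_pos hε hden
  set δ0 := E^(1/(lam+β-1)) with hδ0def
  have hδ0 : 0 < δ0 := Real.rpow_pos_of_pos hE _
  have hδ0E : δ0^(lam+β-1) = E := by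
    have hne : lam+β-1 ≠ 0 := by intro h; linarith
    have hexp : (1/(lam+β-1))*(lam+β-1) = 1 := by
      rw [one_div, inv_mul_cancel₀ hne]
    rw [hδ0def, ← Real.rpow_mul hE.le, hexp, Real.rpow_one]
  clear_value δ0 E
  have hbound : 2*(C*(δ0^(lam+β-1)*T)) ≤ ε/2 := by
    rw [hδ0E, hEdef]
    exact bound_aux hC0 hT.le hε
  obtain ⟨P1, hP1⟩ := (Metric.tendsto_atTop.1 hI) (ε/2) (by linarith)
  obtain ⟨P2, hP2⟩ := exists_nat_gt (T/δ0)
  set p := max P1 P2 with hpdef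
  have hmesh_p : T/((p:ℝ)+1) ≤ δ0 := by
    have hp2 : (P2:ℝ) ≤ (p:ℝ) := by exact_mod_cast le_max_right P1 P2
    have h : T/δ0 < (p:ℝ)+1 := by linarith
    rw [div_lt_iff₀ hδ0] at h
    rw [div_le_iff₀ (by positivity)]
    nlinarith
  refine ⟨δ0, hδ0, ?_⟩
  intro n t ξ hn ht0 htn hts hmesh htag
  have happ := lemC hlam hβ hθ1 hKf hKg hf hg Z hZ δ0
    n t ξ hn ht0 htn hts hmesh htag
    (p+1) (up p) (up p) (by omega) (hup0 p) (hupT p) (hupstep p)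
    (fun i hi => by rw [hupmesh p i hi]; exact hmesh_p)
    (fun i hi => ⟨le_rfl, hupstep p i hi⟩)
  have happ' : |(∑ i ∈ Finset.range n, f (ξ i) * (g (t (i + 1)) - g (t i))) - IS p|
      ≤ 2*(C*(δ0^(lam+β-1)*T)) := by
    simp only [hISdef]
    rw [hCdef]
    exact happ
  have hIp : |IS p - I| ≤ ε/2 := by
    have h := hP1 p (le_max_left _ _)
    rw [Real.dist_eq] at h
    exact h.le
  calc |(∑ i ∈ Finset.range n, f (ξ i) * (g (t (i + 1)) - g (t i))) - I|
      ≤ |(∑ i ∈ Finset.range n, f (ξ i) * (g (t (i + 1)) - g (t i))) - IS p|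
        + |IS p - I| := abs_sub_le _ _ _
    _ ≤ 2*(C*(δ0^(lam+β-1)*T)) + ε/2 := add_le_add happ' hIp
    _ ≤ ε/2 + ε/2 := by linarith
    _ = ε := by ring
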